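/- Let X be a proper complete metric space, let f_1, ..., f_N : X → X be continuous maps with Hutchinson operator F, let A be a nonempty compact set with F(A) = A, and let U be an open set with A ⊆ U such that F^k(B) → A in the Hausdorff metric for every nonempty compact B ⊆ U. Fix p ∈ (0, 1/N] and x_0 ∈ U, let σ_1, σ_2, ... : Ω → {1,...,N} be random variables on a probability space such that for every k and n and every event E measurable with respect to σ_1,...,σ_{k-1}, P({σ_k = n} ∩ E) ≥ p · P(E), and define x_k(ω) = f_{σ_k(ω)}(x_{k-1}(ω)). Then, with probability one, ⋂_{K≥1} closure({x_k : k ≥ K}) = A. -/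

import Mathlib

open Metric Filter MeasureTheory
open scoped Topology ENNReal

namespace ChaosGameAux

variable {X : Type*} {N : ℕ} (f : Fin N → X → X)

/-- Apply `f (w (n-1)) ∘ ... ∘ f (w 0)` to a point. -/
def iterApply : ℕ → (ℕ → Fin N) → X → X
  | 0, _, y => y
  | n+1, w, y => f (w n) (iterApply n w y)

theorem iterApply_congr {n : ℕ} {w w' : ℕ → Fin N} (h : ∀ j < n, w j = w' j) (y : X) :
    iterApply f n w y = iterApply f n w' y := by
  induction n with
  | zero => rfl
  | succ n ih =>
    simp only [iterApply, h n (by omega), ih (fun j hj => h j (by omega))]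

theorem continuous_iterApply [TopologicalSpace X] (hf : ∀ i, Continuous (f i)) (n : ℕ)
    (w : ℕ → Fin N) : Continuous (iterApply f n w) := by
  induction n with
  | zero => exact continuous_id
  | succ n ih => exact (hf (w n)).comp ih

theorem mem_iterate_iff (hN : 0 < N) (F : Set X → Set X) (hF : ∀ S, F S = ⋃ i, f i '' S)
    (n : ℕ) (S : Set X) (z : X) :
    z ∈ F^[n] S ↔ ∃ w : ℕ → Fin N, ∃ s ∈ S, z = iterApply f n w s := by
  induction n generalizing z with
  | zero =>
    simp only [Function.iterate_zero, id_eq, iterApply]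
    constructor
    · exact fun hz => ⟨fun _ => ⟨0, hN⟩, z, hz, rfl⟩
    · rintro ⟨w, s, hs, rfl⟩; exact hs
  | succ n ih =>
    rw [Function.iterate_succ_apply', hF]
    constructor
    · rintro hz
      simp only [Set.mem_iUnion, Set.mem_image] at hz
      obtain ⟨i, t, ht, rfl⟩ := hz
      obtain ⟨w, s, hs, rfl⟩ := (ih _).1 ht
      refine ⟨Function.update w n i, s, hs, ?_⟩
      simp only [iterApply, Function.update_self]
      rw [iterApply_congr f (w := Function.update w n i) (w' := w)
        (fun j hj => Function.update_of_ne (by omega) _ _) s]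
    · rintro ⟨w, s, hs, rfl⟩
      simp only [Set.mem_iUnion, Set.mem_image, iterApply]
      exact ⟨w n, iterApply f n w s, (ih _).2 ⟨w, s, hs, rfl⟩, rfl⟩

variable {Ω : Type*} [MeasurableSpace Ω] (σ : ℕ → Ω → Fin N)

/-- The σ-algebra generated by the first `k` selections. -/
def Filt (k : ℕ) : MeasurableSpace Ω := ⨆ j : Fin k, MeasurableSpace.comap (σ (j : ℕ)) ⊤

theorem filt_mono {k t : ℕ} (h : k ≤ t) : Filt σ k ≤ Filt σ t :=
  iSup_le fun j => le_iSup_of_le (⟨(j : ℕ), lt_of_lt_of_le j.2 h⟩ : Fin t) le_rfl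

theorem filt_le (hσ : ∀ k, Measurable (σ k)) (k : ℕ) : Filt σ k ≤ ‹MeasurableSpace Ω› :=
  iSup_le fun j => fun s hs => by
    obtain ⟨s', -, rfl⟩ := hs
    exact hσ j (by trivial)

theorem measurableSet_sigma_eq {k j : ℕ} (hj : j < k) (i : Fin N) :
    MeasurableSet[Filt σ k] {ω | σ j ω = i} := by
  have h1 : MeasurableSet[MeasurableSpace.comap (σ j) ⊤] {ω | σ j ω = i} :=
    MeasurableSpace.measurableSet_comap.mpr ⟨{i}, trivial, rfl⟩
  exact le_iSup (fun j : Fin k => MeasurableSpace.comap (σ (j : ℕ)) ⊤) ⟨j, hj⟩ _ h1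

theorem measurableSet_cyl (t n : ℕ) (w : ℕ → Fin N) :
    MeasurableSet[Filt σ (t + n)] {ω | ∀ r < n, σ (t + r) ω = w r} := by
  have : {ω | ∀ r < n, σ (t + r) ω = w r} = ⋂ r ∈ Set.Iio n, {ω | σ (t + r) ω = w r} := by
    ext ω; simp
  rw [this]
  exact MeasurableSet.biInter (Set.to_countable _)
    (fun r hr => measurableSet_sigma_eq σ (by simp at hr; omega) (w r))

theorem measurableSet_cyl0 (k : ℕ) (w : ℕ → Fin N) :
    MeasurableSet[Filt σ k] {ω | ∀ j < k, σ j ω = w j} := by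
  have : {ω | ∀ j < k, σ j ω = w j} = ⋂ j ∈ Set.Iio k, {ω | σ j ω = w j} := by ext ω; simp
  rw [this]
  exact MeasurableSet.biInter (Set.to_countable _)
    (fun j hj => measurableSet_sigma_eq σ (by simpa using hj) (w j))

theorem follow_word {P : Measure Ω} {p : ℝ}
    (hcond : ∀ (k : ℕ) (n : Fin N) (E : Set Ω), MeasurableSet[Filt σ k] E →
      ENNReal.ofReal p * P E ≤ P ({ω | σ k ω = n} ∩ E))
    (t : ℕ) (n : ℕ) (w : ℕ → Fin N) (E : Set Ω) (hE : MeasurableSet[Filt σ t] E) :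
    ENNReal.ofReal p ^ n * P E ≤ P ({ω | ∀ r < n, σ (t + r) ω = w r} ∩ E) := by
  induction n with
  | zero =>
    simpa using measure_mono (show E ⊆ {ω | ∀ r < 0, σ (t + r) ω = w r} ∩ E from
      fun ω hω => ⟨by omega, hω⟩)
  | succ n ih =>
    set E' := {ω | ∀ r < n, σ (t + r) ω = w r} ∩ E with hE'
    have hE'meas : MeasurableSet[Filt σ (t + n)] E' :=
      (measurableSet_cyl σ t n w).inter ((filt_mono σ (by omega)) _ hE)
    have h1 := hcond (t + n) (w n) E' hE'meas
    have h2 : {ω | σ (t + n) ω = w n} ∩ E' = {ω | ∀ r < n + 1, σ (t + r) ω = w r} ∩ E := by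
      ext ω
      simp only [Set.mem_inter_iff, Set.mem_setOf_eq, hE']
      constructor
      · rintro ⟨h, hcyl, hEω⟩
        refine ⟨fun r hr => ?_, hEω⟩
        rcases Nat.lt_succ_iff_lt_or_eq.1 hr with h' | h'
        exacts [hcyl r h', h' ▸ h]
      · rintro ⟨hcyl, hEω⟩
        exact ⟨hcyl n (by omega), fun r hr => hcyl r (by omega), hEω⟩
    calc ENNReal.ofReal p ^ (n + 1) * P E
        = ENNReal.ofReal p * (ENNReal.ofReal p ^ n * P E) := by ring
      _ ≤ ENNReal.ofReal p * P E' := mul_le_mul_right ih _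
      _ ≤ P ({ω | σ (t + n) ω = w n} ∩ E') := h1
      _ = _ := by rw [h2]

theorem measurableSet_orbit_preimage (hN : 0 < N) (x₀ : X) (k : ℕ) (S : Set X) :
    MeasurableSet[Filt σ k] {ω | iterApply f k (fun j => σ j ω) x₀ ∈ S} := by
  classical
  set ext : (Fin k → Fin N) → (ℕ → Fin N) :=
    fun w j => if h : j < k then w ⟨j, h⟩ else ⟨0, hN⟩ with hext
  have key : {ω | iterApply f k (fun j => σ j ω) x₀ ∈ S}
      = ⋃ w ∈ {w : Fin k → Fin N | iterApply f k (ext w) x₀ ∈ S},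
          {ω | ∀ j < k, σ j ω = ext w j} := by
    ext ω
    simp only [Set.mem_iUnion, Set.mem_setOf_eq]
    constructor
    · intro hω
      refine ⟨fun j => σ (j : ℕ) ω, ?_, fun j hj => by simp [hext, hj]⟩
      have heq : iterApply f k (ext fun j : Fin k => σ (j : ℕ) ω) x₀
          = iterApply f k (fun j => σ j ω) x₀ :=
        iterApply_congr f (fun j hj => by simp [hext, hj]) x₀
      rw [heq]; exact hω
    · rintro ⟨w, hwS, hcyl⟩
      have heq : iterApply f k (fun j => σ j ω) x₀ = iterApply f k (ext w) x₀ :=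
        iterApply_congr f (fun j hj => hcyl j hj) x₀
      rw [heq]; exact hwS
  rw [key]
  exact MeasurableSet.biUnion (Set.to_countable _) fun w _ => measurableSet_cyl0 σ k (ext w)

end ChaosGameAux

open ChaosGameAux

theorem chaos_game_iInter_closure {X : Type*} [MetricSpace X] [ProperSpace X]
    [CompleteSpace X]
    {N : ℕ} (f : Fin N → X → X) (hf : ∀ i, Continuous (f i))
    (F : Set X → Set X) (hF : ∀ S : Set X, F S = ⋃ i, f i '' S)
    (A : Set X) (hA : A.Nonempty) (hAc : IsCompact A) (hfix : F A = A)
    (U : Set X) (hU : IsOpen U) (hAU : A ⊆ U)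
    (hattr : ∀ B : Set X, B.Nonempty → IsCompact B → B ⊆ U →
      Tendsto (fun k => hausdorffDist (F^[k] B) A) atTop (𝓝 0))
    (p : ℝ) (hp : 0 < p) (hpN : p ≤ 1 / N)
    (x₀ : X) (hx₀ : x₀ ∈ U)
    {Ω : Type*} [MeasurableSpace Ω] (P : Measure Ω) [IsProbabilityMeasure P]
    (σ : ℕ → Ω → Fin N) (hσ : ∀ k, Measurable (σ k))
    (hcond : ∀ (k : ℕ) (n : Fin N) (E : Set Ω),
      MeasurableSet[⨆ j : Fin k, MeasurableSpace.comap (σ (j : ℕ)) ⊤] E →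
      ENNReal.ofReal p * P E ≤ P ({ω | σ k ω = n} ∩ E))
    (x : ℕ → Ω → X) (hx0 : ∀ ω, x 0 ω = x₀)
    (hxk : ∀ (k : ℕ) (ω : Ω), x (k + 1) ω = f (σ k ω) (x k ω)) :
    ∀ᵐ ω ∂P, ⋂ K ≥ 1, closure ((fun k => x k ω) '' Set.Ici K) = A := by
  classical
  -- basic facts about N and p
  have hN : 0 < N := by
    rcases Nat.eq_zero_or_pos N with h | h
    · subst h; simp at hpN; linarith
    · exact h
  have hNR : (1 : ℝ) ≤ N := by exact_mod_cast hN
  have hp1 : p ≤ 1 := hpN.trans ((div_le_one (by linarith)).2 hNR)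
  set q : ℝ≥0∞ := ENNReal.ofReal p with hqdef
  have hq0 : q ≠ 0 := (ENNReal.ofReal_pos.2 hp).ne'
  have hq1 : q ≤ 1 := ENNReal.ofReal_le_one.2 hp1
  -- compactness facts
  have hFcomp : ∀ S : Set X, IsCompact S → IsCompact (F S) := fun S hS => by
    rw [hF]; exact isCompact_iUnion fun i => hS.image (hf i)
  have hIterComp : ∀ (n : ℕ) (S : Set X), IsCompact S → IsCompact (F^[n] S) := by
    intro n S hS
    induction n with
    | zero => simpa
    | succ n ih => rw [Function.iterate_succ_apply']; exact hFcomp _ ih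
  have hIterNe : ∀ (n : ℕ) (S : Set X), S.Nonempty → (F^[n] S).Nonempty := by
    intro n S hS
    obtain ⟨s, hs⟩ := hS
    exact ⟨_, (mem_iterate_iff f hN F hF n S _).2 ⟨fun _ => ⟨0, hN⟩, s, hs, rfl⟩⟩
  -- the orbit identity
  have horbit : ∀ (k n : ℕ) (ω : Ω),
      x (k + n) ω = iterApply f n (fun r => σ (k + r) ω) (x k ω) := by
    intro k n ω
    induction n with
    | zero => rfl
    | succ n ih => rw [show k + (n + 1) = (k + n) + 1 from rfl, hxk, ih]; rfl
  have hxw : ∀ (k : ℕ) (ω : Ω), x k ω = iterApply f k (fun j => σ j ω) x₀ := by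
    intro k ω
    have h := horbit 0 k ω
    simpa [hx0 ω] using h
  have hxF : ∀ (k : ℕ) (ω : Ω), x k ω ∈ F^[k] {x₀} := fun k ω =>
    (mem_iterate_iff f hN F hF k _ _).2 ⟨fun j => σ j ω, x₀, rfl, hxw k ω⟩
  -- preimage measurability
  have hxpre : ∀ (k : ℕ) (S : Set X), MeasurableSet[Filt σ k] {ω | x k ω ∈ S} := by
    intro k S
    have h : {ω | x k ω ∈ S} = {ω | iterApply f k (fun j => σ j ω) x₀ ∈ S} := by
      ext ω; rw [Set.mem_setOf_eq, Set.mem_setOf_eq, hxw]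
    rw [h]
    exact measurableSet_orbit_preimage f σ hN x₀ k S
  -- eventually the orbit is uniformly near A
  have hsmall : ∀ ε : ℝ, 0 < ε → ∃ K, ∀ k, K ≤ k → ∀ ω, infDist (x k ω) A < ε := by
    intro ε hε
    have h := hattr {x₀} ⟨x₀, rfl⟩ isCompact_singleton (Set.singleton_subset_iff.2 hx₀)
    obtain ⟨K, hK⟩ := eventually_atTop.1 (h.eventually (gt_mem_nhds hε))
    refine ⟨K, fun k hk ω => ?_⟩
    have hfin : EMetric.hausdorffEdist (F^[k] {x₀}) A ≠ ⊤ :=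
      hausdorffEdist_ne_top_of_nonempty_of_bounded (hIterNe k _ ⟨x₀, rfl⟩) hA
        (hIterComp k _ isCompact_singleton).isBounded hAc.isBounded
    exact lt_of_le_of_lt (infDist_le_hausdorffDist_of_mem (hxF k ω) hfin) (hK k hk)
  -- deterministic upper bound
  have hupper : ∀ ω : Ω, (⋂ K ≥ 1, closure ((fun k => x k ω) '' Set.Ici K)) ⊆ A := by
    intro ω y hy
    simp only [Set.mem_iInter] at hy
    have hle : ∀ ε : ℝ, 0 < ε → infDist y A ≤ ε := by
      intro ε hε
      obtain ⟨K, hK⟩ := hsmall ε hε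
      have hy' := hy (max K 1) (le_max_right _ _)
      have hsub : (fun k => x k ω) '' Set.Ici (max K 1) ⊆ {z | infDist z A ≤ ε} := by
        rintro _ ⟨k, hk, rfl⟩
        exact (hK k (le_trans (le_max_left _ _) hk) ω).le
      have hcl : IsClosed {z : X | infDist z A ≤ ε} :=
        isClosed_le (continuous_infDist_pt A) continuous_const
      exact closure_minimal hsub hcl hy'
    have h0 : infDist y A = 0 := by
      by_contra h
      have hpos : 0 < infDist y A := lt_of_le_of_ne infDist_nonneg (Ne.symm h)
      linarith [hle (infDist y A / 2) (by linarith)]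
    have := (mem_closure_iff_infDist_zero hA).2 h0
    rwa [hAc.isClosed.closure_eq] at this
  -- absorbing compact set C and entry time K₀
  obtain ⟨ε₀, hε₀, hCU⟩ := hAc.exists_cthickening_subset_open hU hAU
  set C := cthickening ε₀ A with hCdef
  have hCcomp : IsCompact C := hAc.cthickening
  have hCne : C.Nonempty := hA.mono (self_subset_cthickening A)
  haveI : Nonempty ↥C := hCne.to_subtype
  obtain ⟨K₀, hK₀⟩ := hsmall ε₀ hε₀
  have hxC : ∀ k, K₀ ≤ k → ∀ ω, x k ω ∈ C := by
    intro k hk ω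
    obtain ⟨c, hcA, hcd⟩ := (infDist_lt_iff hA).1 (hK₀ k hk ω)
    exact mem_cthickening_of_dist_le _ _ _ _ hcA hcd.le
  -- KEY probabilistic lemma
  have hkey : ∀ a ∈ A, ∀ ε : ℝ, 0 < ε → ∀ K : ℕ,
      P {ω | ∀ k, K ≤ k → ε ≤ dist (x k ω) a} = 0 := by
    intro a ha ε hε
    suffices hsuf : ∀ K, K₀ ≤ K → P {ω | ∀ k, K ≤ k → ε ≤ dist (x k ω) a} = 0 by
      intro K
      refine measure_mono_null (fun ω hω k hk => hω k (le_trans (le_max_left K K₀) hk))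
        (hsuf (max K K₀) (le_max_right _ _))
    intro K hKK₀
    -- word data for each point of C
    have hword : ∀ y : X, y ∈ C → ∃ (n : ℕ) (w : ℕ → Fin N) (V : Set X),
        IsOpen V ∧ y ∈ V ∧ ∀ z ∈ V, dist (iterApply f n w z) a < ε := by
      intro y hy
      have h := hattr {y} ⟨y, rfl⟩ isCompact_singleton (Set.singleton_subset_iff.2 (hCU hy))
      obtain ⟨n, hn⟩ := eventually_atTop.1 (h.eventually (gt_mem_nhds (half_pos hε)))
      have hne : (F^[n] {y}).Nonempty := hIterNe n _ ⟨y, rfl⟩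
      have hfin : EMetric.hausdorffEdist A (F^[n] {y}) ≠ ⊤ :=
        hausdorffEdist_ne_top_of_nonempty_of_bounded hA hne hAc.isBounded
          (hIterComp n _ isCompact_singleton).isBounded
      have h1 : infDist a (F^[n] {y}) < ε / 2 := by
        refine lt_of_le_of_lt (infDist_le_hausdorffDist_of_mem ha hfin) ?_
        rw [hausdorffDist_comm]; exact hn n le_rfl
      obtain ⟨z, hz, hdz⟩ := (infDist_lt_iff hne).1 h1
      obtain ⟨w, s, hs, rfl⟩ := (mem_iterate_iff f hN F hF n _ _).1 hz
      rw [Set.mem_singleton_iff] at hs; subst hs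
      refine ⟨n, w, (iterApply f n w) ⁻¹' ball a ε,
        isOpen_ball.preimage (continuous_iterApply f hf n w), ?_, ?_⟩
      · show iterApply f n w s ∈ ball a ε
        rw [mem_ball, dist_comm]
        linarith
      · intro z hzV
        rw [Set.mem_preimage, mem_ball] at hzV
        exact hzV
    choose nn0 ww0 VV0 hVopen0 hmemV0 hVball0 using hword
    set nn : ↥C → ℕ := fun i => nn0 i i.2 with hnn
    set ww : ↥C → ℕ → Fin N := fun i => ww0 i i.2 with hww
    set VV : ↥C → Set X := fun i => VV0 i i.2 with hVV
    have hVball : ∀ (i : ↥C), ∀ z ∈ VV i, dist (iterApply f (nn i) (ww i) z) a < ε :=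
      fun i z hz => hVball0 i i.2 z hz
    -- finite subcover of C
    obtain ⟨t, ht⟩ := hCcomp.elim_finite_subcover VV
      (fun i => hVopen0 i i.2) (fun y hy => Set.mem_iUnion.2 ⟨⟨y, hy⟩, hmemV0 y hy⟩)
    set M := t.sup nn with hMdef
    -- measurable selection
    have hsel : ∀ z : X, z ∈ C → ∃ i : ↥C, i ∈ t ∧ z ∈ VV i := by
      intro z hz
      have h := ht hz
      simp only [Set.mem_iUnion] at h
      obtain ⟨i, hi, hzi⟩ := h
      exact ⟨i, hi, hzi⟩
    set g : X → ↥C := fun z =>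
      if h : ∃ i : ↥C, i ∈ t ∧ z ∈ VV i then h.choose else Classical.arbitrary _ with hgdef
    have hg : ∀ z, z ∈ C → g z ∈ t ∧ z ∈ VV (g z) := by
      intro z hz
      have h := hsel z hz
      have hgz : g z = h.choose := by simp only [hgdef]; rw [dif_pos h]
      rw [hgz]
      exact h.choose_spec
    -- the decreasing bad events
    set D : ℕ → Set Ω :=
      fun j => {ω | ∀ k, K ≤ k → k ≤ K + j * M → ε ≤ dist (x k ω) a} with hDdef
    have hDmeas : ∀ j, MeasurableSet[Filt σ (K + j * M)] (D j) := by
      intro j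
      have h : D j = ⋂ k ∈ Set.Icc K (K + j * M), {ω | x k ω ∈ {z | ε ≤ dist z a}} := by
        ext ω; simp [hDdef, Set.mem_Icc]
      rw [h]
      exact MeasurableSet.biInter (Set.to_countable _)
        (fun k hk => filt_mono σ (Set.mem_Icc.1 hk).2 _ (hxpre k _))
    have hDamb : ∀ j, MeasurableSet (D j) := fun j => filt_le σ hσ _ _ (hDmeas j)
    -- one-step decay
    have hstep : ∀ j : ℕ, P (D (j + 1)) + q ^ M * P (D j) ≤ P (D j) := by
      intro j
      set T := K + j * M with hTdef
      have hKT : K ≤ T := by omega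
      have hK₀T : K₀ ≤ T := le_trans hKK₀ hKT
      set E : ↥C → Set Ω := fun i => D j ∩ {ω | g (x T ω) = i} with hEdef
      have hEmeas : ∀ i, MeasurableSet[Filt σ T] (E i) := fun i =>
        (hDmeas j).inter (hxpre T {z | g z = i})
      set G : ↥C → Set Ω :=
        fun i => E i ∩ {ω | x (T + nn i) ω ∈ ball a ε} with hGdef
      have hGamb : ∀ i, MeasurableSet (G i) := fun i =>
        (filt_le σ hσ _ _ (hEmeas i)).inter (filt_le σ hσ _ _ (hxpre _ _))
      -- key estimate for each piece
      have hpiece : ∀ i ∈ t, q ^ M * P (E i) ≤ P (G i) := by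
        intro i hi
        have h1 : q ^ M * P (E i) ≤ q ^ (nn i) * P (E i) :=
          mul_le_mul_left (pow_le_pow_of_le_one zero_le hq1
            (Finset.le_sup (f := fun i : ↥C => nn i) hi)) _
        have h2 := follow_word σ hcond T (nn i) (ww i) (E i) (hEmeas i)
        refine le_trans h1 (le_trans h2 (measure_mono ?_))
        rintro ω ⟨hcyl, hDω, hgω⟩
        have hxTC : x T ω ∈ C := hxC T hK₀T ω
        have hxTV : x T ω ∈ VV (g (x T ω)) := (hg _ hxTC).2
        rw [hgω] at hxTV
        refine ⟨⟨hDω, hgω⟩, ?_⟩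
        have heq : x (T + nn i) ω = iterApply f (nn i) (ww i) (x T ω) := by
          rw [horbit T (nn i) ω]
          exact iterApply_congr f (fun r hr => hcyl r hr) (x T ω)
        rw [Set.mem_setOf_eq, heq, mem_ball]
        exact hVball _ _ hxTV
      -- D j is the disjoint union of the E i
      have hDcover : D j = ⋃ i ∈ t, E i := by
        apply Set.Subset.antisymm
        · intro ω hω
          have hxTC : x T ω ∈ C := hxC T hK₀T ω
          exact Set.mem_biUnion (hg _ hxTC).1 ⟨hω, rfl⟩
        · intro ω hω
          simp only [Set.mem_iUnion, hEdef] at hω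
          obtain ⟨i, -, hω, -⟩ := hω
          exact hω
      -- the G i are pairwise disjoint and lie in D j \ D (j+1)
      have hGdisj : (↑t : Set ↥C).PairwiseDisjoint G := by
        intro i _ i' _ hne
        refine Set.disjoint_left.2 fun ω hωi hωi' => hne ?_
        have h1 : g (x T ω) = i := hωi.1.2
        have h2 : g (x T ω) = i' := hωi'.1.2
        rw [← h1, h2]
      have hGD : ∀ i ∈ t, G i ⊆ D j \ D (j + 1) := by
        intro i hi ω hω
        refine ⟨hω.1.1, fun hω' => ?_⟩
        have hni : nn i ≤ M := Finset.le_sup (f := fun i : ↥C => nn i) hi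
        have hball := hω.2
        rw [Set.mem_setOf_eq, mem_ball] at hball
        have hle : T + nn i ≤ K + (j + 1) * M := by
          have h' : (j + 1) * M = j * M + M := by ring
          omega
        have := hω' (T + nn i) (by omega) hle
        linarith
      -- put everything together
      have hsum : q ^ M * P (D j) ≤ P (⋃ i ∈ t, G i) := by
        rw [measure_biUnion_finset hGdisj (fun i _ => hGamb i)]
        calc q ^ M * P (D j) ≤ q ^ M * ∑ i ∈ t, P (E i) := by
              refine mul_le_mul_right ?_ _
              rw [hDcover]
              exact measure_biUnion_finset_le t E
          _ = ∑ i ∈ t, q ^ M * P (E i) := Finset.mul_sum _ _ _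
          _ ≤ ∑ i ∈ t, P (G i) := Finset.sum_le_sum hpiece
      have hDsub : D (j + 1) ⊆ D j := by
        intro ω hω k hk1 hk2
        have hM' : (j + 1) * M = j * M + M := by ring
        exact hω k hk1 (by omega)
      have hunion : P (D (j + 1)) + P (⋃ i ∈ t, G i) ≤ P (D j) := by
        have hdisj : Disjoint (D (j + 1)) (⋃ i ∈ t, G i) := by
          refine Set.disjoint_left.2 fun ω hω hω' => ?_
          simp only [Set.mem_iUnion] at hω'
          obtain ⟨i, hi, hω'⟩ := hω'
          exact (hGD i hi hω').2 hω
        have hmeas : MeasurableSet (⋃ i ∈ t, G i) :=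
          t.measurableSet_biUnion fun i _ => hGamb i
        calc P (D (j + 1)) + P (⋃ i ∈ t, G i)
            = P (D (j + 1) ∪ ⋃ i ∈ t, G i) := (measure_union hdisj hmeas).symm
          _ ≤ P (D j) := by
              refine measure_mono ?_
              rintro ω (hω | hω)
              · exact hDsub hω
              · simp only [Set.mem_iUnion] at hω
                obtain ⟨i, hi, hω⟩ := hω
                exact (hGD i hi hω).1
      calc P (D (j + 1)) + q ^ M * P (D j) ≤ P (D (j + 1)) + P (⋃ i ∈ t, G i) :=
            add_le_add_right hsum _
        _ ≤ P (D j) := hunion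
    -- geometric decay
    have hqM1 : q ^ M ≤ 1 := pow_le_one' hq1 M
    have hqMne : q ^ M ≠ ⊤ := (hqM1.trans_lt ENNReal.one_lt_top).ne
    have hdecay : ∀ j, P (D (j + 1)) ≤ (1 - q ^ M) * P (D j) := by
      intro j
      have h2 : (1 - q ^ M) * P (D j) + q ^ M * P (D j) = P (D j) := by
        rw [← add_mul, tsub_add_cancel_of_le hqM1, one_mul]
      refine (ENNReal.add_le_add_iff_right
        (ENNReal.mul_ne_top hqMne (measure_ne_top P (D j)))).1 ?_
      rw [h2]
      exact hstep j
    have hgeom : ∀ j, P (D j) ≤ (1 - q ^ M) ^ j := by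
      intro j
      induction j with
      | zero => simpa using prob_le_one
      | succ j ih =>
        calc P (D (j + 1)) ≤ (1 - q ^ M) * P (D j) := hdecay j
          _ ≤ (1 - q ^ M) * (1 - q ^ M) ^ j := mul_le_mul_right ih _
          _ = (1 - q ^ M) ^ (j + 1) := (pow_succ' _ _).symm
    -- conclusion
    have hsubD : ∀ j, {ω | ∀ k, K ≤ k → ε ≤ dist (x k ω) a} ⊆ D j :=
      fun j ω hω k hk _ => hω k hk
    have hlt1 : (1 : ℝ≥0∞) - q ^ M < 1 :=
      ENNReal.sub_lt_self ENNReal.one_ne_top one_ne_zero (pow_ne_zero M hq0)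
    have htend := ENNReal.tendsto_pow_atTop_nhds_zero_of_lt_one hlt1
    have hle0 : P {ω | ∀ k, K ≤ k → ε ≤ dist (x k ω) a} ≤ 0 :=
      ge_of_tendsto htend (Eventually.of_forall fun j =>
        le_trans (measure_mono (hsubD j)) (hgeom j))
    exact le_antisymm hle0 zero_le
  -- countable dense subset of A
  obtain ⟨D₀, hD₀c, hD₀A, hD₀d⟩ : ∃ D₀ : Set X, D₀.Countable ∧ D₀ ⊆ A ∧
      ∀ a ∈ A, ∀ r : ℝ, 0 < r → ∃ d ∈ D₀, dist a d < r := by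
    obtain ⟨s, hsc, hsd⟩ := TopologicalSpace.exists_countable_dense ↥A
    refine ⟨Subtype.val '' s, hsc.image _, by rintro _ ⟨b, -, rfl⟩; exact b.2, ?_⟩
    intro a ha r hr
    obtain ⟨⟨d, hdA⟩, hds, hdd⟩ := hsd.exists_dist_lt (⟨a, ha⟩ : ↥A) hr
    exact ⟨d, ⟨⟨d, hdA⟩, hds, rfl⟩, by rwa [Subtype.dist_eq] at hdd⟩
  -- almost sure recurrence near every point of the dense set
  have hae : ∀ᵐ ω ∂P, ∀ d ∈ D₀, ∀ m : ℕ, ∀ K : ℕ,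
      ∃ k, K ≤ k ∧ dist (x k ω) d < 1 / (m + 1) := by
    rw [ae_ball_iff hD₀c]
    intro d hd
    rw [ae_all_iff]
    intro m
    have h0 : (0 : ℝ) < 1 / (m + 1) := by positivity
    have hnull := hkey d (hD₀A hd) _ h0
    rw [ae_iff]
    refine measure_mono_null ?_ (measure_iUnion_null fun K => hnull K)
    intro ω hω
    rw [Set.mem_setOf_eq] at hω
    push_neg at hω
    obtain ⟨K, hK⟩ := hω
    exact Set.mem_iUnion.2 ⟨K, hK⟩
  -- final assembly
  filter_upwards [hae] with ω hω
  refine Set.Subset.antisymm (hupper ω) ?_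
  intro a ha
  simp only [Set.mem_iInter]
  intro K _
  rw [_root_.mem_closure_iff]
  intro o ho hao
  obtain ⟨r, hr, hro⟩ := isOpen_iff.1 ho a hao
  obtain ⟨m, hm⟩ := exists_nat_one_div_lt (half_pos hr)
  have h0 : (0 : ℝ) < 1 / (m + 1) := by positivity
  obtain ⟨d, hd, had⟩ := hD₀d a ha _ h0
  obtain ⟨k, hk, hdk⟩ := hω d hd m K
  refine ⟨x k ω, hro ?_, ⟨k, hk, rfl⟩⟩
  rw [mem_ball']
  calc dist a (x k ω) ≤ dist a d + dist d (x k ω) := dist_triangle _ _ _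
    _ < 1 / (m + 1) + 1 / (m + 1) := add_lt_add had (by rwa [dist_comm])
    _ < r / 2 + r / 2 := add_lt_add hm hm
    _ = r := by ring
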